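/- Let R ∈ ℝ^{2×2} be the rotation matrix with rows (0, 1) and (−1, 0), and let ‖·‖ denote the Euclidean norm on ℝ². Then for every x₀ ∈ ℝ² ∖ {0} there exists no differentiable function z : [0,∞) → ℝ² with z(0) = x₀ and z(t) ≠ 0 for all t ∈ [0,∞) which satisfies, for all t ∈ [0,∞), z'(t) = ‖ z(t) − t·R z(t)/‖z(t)‖^{3/2} ‖² · R( z(t) − t·R z(t)/‖z(t)‖^{3/2} ). In other words, the maximal existence time of this ordinary differential equation is finite for every nonzero initial value. -/

import Mathlib

open scoped NNReal

/-- The rotation `R = ((0,1),(-1,0))` of the plane, acting on `ℝ²` with the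
Euclidean norm. -/
noncomputable def planeRot (v : EuclideanSpace ℝ (Fin 2)) : EuclideanSpace ℝ (Fin 2) :=
  WithLp.toLp 2 (fun i : Fin 2 => if i = 0 then v 1 else -(v 0))

lemma planeRot_inner_shift (a : EuclideanSpace ℝ (Fin 2)) (c : ℝ) :
    (inner ℝ a (planeRot (a - c • planeRot a)) : ℝ) = c * inner ℝ a a := by
  simp [PiLp.inner_apply, Fin.sum_univ_two, planeRot, RCLike.inner_apply, conj_trivial,
    PiLp.sub_apply, PiLp.smul_apply, smul_eq_mul, EuclideanSpace.norm_sq_eq]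
  ring

lemma planeRot_norm_shift (a : EuclideanSpace ℝ (Fin 2)) (c : ℝ) :
    (inner ℝ (a - c • planeRot a) (a - c • planeRot a) : ℝ) = (1 + c ^ 2) * inner ℝ a a := by
  simp [PiLp.inner_apply, Fin.sum_univ_two, planeRot, RCLike.inner_apply, conj_trivial,
    PiLp.sub_apply, PiLp.smul_apply, smul_eq_mul, EuclideanSpace.norm_sq_eq]
  ring

/-- For every nonzero initial value `x₀ ∈ ℝ²` there is no globally defined
(nonvanishing) differentiable solution `z : [0,∞) → ℝ²` of the ODE
`z'(t) = ‖z(t) - t R z(t)/‖z(t)‖^(3/2)‖² · R (z(t) - t R z(t)/‖z(t)‖^(3/2))`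
with `z(0) = x₀`; that is, the maximal existence time is finite. -/
theorem no_global_solution_rotation_ode
    (x₀ : EuclideanSpace ℝ (Fin 2)) (hx₀ : x₀ ≠ 0) :
    ¬ ∃ z : ℝ → EuclideanSpace ℝ (Fin 2),
        z 0 = x₀ ∧ (∀ t ∈ Set.Ici (0 : ℝ), z t ≠ 0) ∧
        ∀ t ∈ Set.Ici (0 : ℝ),
          HasDerivWithinAt z
            ((‖z t - (t / ‖z t‖ ^ ((3 : ℝ) / 2)) • planeRot (z t)‖ ^ 2) •
              planeRot (z t - (t / ‖z t‖ ^ ((3 : ℝ) / 2)) • planeRot (z t)))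
            (Set.Ici 0) t := by
  rintro ⟨z, hz0, hne, hD⟩
  set u : ℝ → ℝ := fun t => (inner ℝ (z t) (z t) : ℝ) with hu_def
  have hnpos : ∀ t ∈ Set.Ici (0 : ℝ), (0 : ℝ) < ‖z t‖ := fun t ht =>
    norm_pos_iff.2 (hne t ht)
  have hueq : ∀ t, u t = ‖z t‖ ^ 2 := fun t => real_inner_self_eq_norm_sq (z t)
  have hupos : ∀ t ∈ Set.Ici (0 : ℝ), 0 < u t := fun t ht => by
    rw [hueq]; exact pow_pos (hnpos t ht) 2
  -- the function g and its derivative candidate d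
  set g : ℝ → ℝ := fun t => u t ^ (-(1 / 4) : ℝ) + t ^ 2 / 4 with hg_def
  -- derivative of g within Ici 0
  have hDg : ∀ t ∈ Set.Ici (0 : ℝ), ∃ d ≤ 0, HasDerivWithinAt g d (Set.Ici 0) t := by
    intro t ht
    have ht0 : (0 : ℝ) ≤ t := ht
    set s : ℝ := t / ‖z t‖ ^ ((3 : ℝ) / 2) with hs_def
    set w : EuclideanSpace ℝ (Fin 2) := z t - s • planeRot (z t) with hw_def
    -- derivative of u
    have hDu : HasDerivWithinAt u (2 * (‖w‖ ^ 2 * (s * u t))) (Set.Ici 0) t := by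
      have h1 := HasDerivWithinAt.inner ℝ (hD t ht) (hD t ht)
      have h2 : (inner ℝ (z t) ((‖w‖ ^ 2 : ℝ) • planeRot w) : ℝ) = ‖w‖ ^ 2 * (s * u t) := by
        rw [real_inner_smul_right, planeRot_inner_shift]
      have h3 : (inner ℝ ((‖w‖ ^ 2 : ℝ) • planeRot w) (z t) : ℝ) = ‖w‖ ^ 2 * (s * u t) := by
        rw [real_inner_comm]; exact h2
      refine h1.congr_deriv ?_
      rw [h2, h3]; ring
    have hu_ne : u t ≠ 0 := ne_of_gt (hupos t ht)
    have hDv : HasDerivWithinAt (fun τ => u τ ^ (-(1 / 4) : ℝ))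
        (2 * (‖w‖ ^ 2 * (s * u t)) * (-(1 / 4) : ℝ) * u t ^ ((-(1 / 4) : ℝ) - 1))
        (Set.Ici 0) t := hDu.rpow_const (Or.inl hu_ne)
    have hDq : HasDerivWithinAt (fun τ : ℝ => τ ^ 2 / 4) (t / 2) (Set.Ici 0) t := by
      have := ((hasDerivAt_pow 2 t).div_const 4).hasDerivWithinAt (s := Set.Ici (0 : ℝ))
      refine this.congr_deriv ?_
      norm_num
      ring
    refine ⟨_, ?_, hDv.add hDq⟩
    -- now show the derivative value is ≤ 0
    have hn := hnpos t ht
    have hs_nonneg : 0 ≤ s := div_nonneg ht0 (Real.rpow_nonneg (norm_nonneg _) _)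
    -- s * u t = t * ‖z t‖ ^ (1/2)
    have hsu : s * u t = t * ‖z t‖ ^ ((1 : ℝ) / 2) := by
      rw [hs_def, hueq, div_mul_eq_mul_div, ← Real.rpow_natCast (‖z t‖) 2,
        div_eq_iff (by positivity), mul_assoc, ← Real.rpow_add hn]
      norm_num
    -- ‖w‖^2 ≥ ‖z t‖^2
    have hw_ge : ‖z t‖ ^ 2 ≤ ‖w‖ ^ 2 := by
      have := planeRot_norm_shift (z t) s
      rw [← hw_def, real_inner_self_eq_norm_sq, real_inner_self_eq_norm_sq] at this
      nlinarith [sq_nonneg s, sq_nonneg ‖z t‖]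
    -- u t ^ (-(1/4) - 1) = ‖z t‖ ^ (-(5/2))
    have hupow : u t ^ ((-(1 / 4) : ℝ) - 1) = ‖z t‖ ^ ((-(5 / 2) : ℝ)) := by
      rw [hueq, ← Real.rpow_natCast (‖z t‖) 2, ← Real.rpow_mul (norm_nonneg _)]
      norm_num
    have hkey : 2 * t * ‖z t‖ ^ ((5 : ℝ) / 2) ≤ 2 * (‖w‖ ^ 2 * (s * u t)) := by
      rw [hsu]
      have h52 : ‖z t‖ ^ ((5 : ℝ) / 2) = ‖z t‖ ^ 2 * ‖z t‖ ^ ((1 : ℝ) / 2) := by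
        rw [← Real.rpow_natCast (‖z t‖) 2, ← Real.rpow_add hn]
        norm_num
      rw [h52]
      have hr : (0 : ℝ) ≤ t * ‖z t‖ ^ ((1 : ℝ) / 2) :=
        mul_nonneg ht0 (Real.rpow_nonneg (norm_nonneg _) _)
      nlinarith [mul_le_mul_of_nonneg_right hw_ge hr]
    have hcanc : ‖z t‖ ^ ((5 : ℝ) / 2) * ‖z t‖ ^ ((-(5 / 2)) : ℝ) = 1 := by
      rw [← Real.rpow_add hn]; norm_num
    rw [hupow]
    have hpow_pos : (0 : ℝ) < ‖z t‖ ^ ((-(5 / 2)) : ℝ) := Real.rpow_pos_of_pos hn _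
    nlinarith [mul_le_mul_of_nonneg_right hkey hpow_pos.le]
  -- g is antitone on Ici 0
  have hanti : AntitoneOn g (Set.Ici (0 : ℝ)) := by
    apply antitoneOn_of_deriv_nonpos (convex_Ici 0)
    · intro t ht
      obtain ⟨d, _, hd⟩ := hDg t ht
      exact hd.continuousWithinAt
    · intro t ht
      rw [interior_Ici] at ht
      obtain ⟨d, _, hd⟩ := hDg t (Set.mem_Ici.2 (le_of_lt ht))
      exact (hd.hasDerivAt (Ici_mem_nhds ht)).differentiableAt.differentiableWithinAt
    · intro t ht
      rw [interior_Ici] at ht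
      obtain ⟨d, hd0, hd⟩ := hDg t (Set.mem_Ici.2 (le_of_lt ht))
      rw [(hd.hasDerivAt (Ici_mem_nhds ht)).deriv]
      exact hd0
  -- contradiction at large time
  have h0 : (0 : ℝ) ∈ Set.Ici (0 : ℝ) := Set.self_mem_Ici
  set b : ℝ := u 0 ^ (-(1 / 4) : ℝ) with hb_def
  have hbpos : 0 < b := Real.rpow_pos_of_pos (hupos 0 h0) _
  set T : ℝ := 2 * b + 2 with hT_def
  have hT : T ∈ Set.Ici (0 : ℝ) := by
    simp only [Set.mem_Ici, hT_def]; linarith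
  have hle := hanti h0 hT (by simp only [hT_def]; linarith)
  have haT : 0 < u T ^ (-(1 / 4) : ℝ) := Real.rpow_pos_of_pos (hupos T hT) _
  simp only [hg_def] at hle
  rw [hT_def] at hle
  nlinarith [haT, hbpos]
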